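/- Let G ≤ Aut(T) be a group of automorphisms of the regular p-adic rooted tree T such that G acts transitively on every level of T. If the rigid level stabilizer RStab_G(n) has finite index in G for every n, and G is finitely generated and torsion, then G is just infinite: every nontrivial normal subgroup of G has finite index. -/

import Mathlib

/-- Vertices of the regular `p`-adic rooted tree: words over an alphabet of size `p`. -/
abbrev Vert (p : ℕ) := List (Fin p)

/-- Grafting: the automorphism of the tree acting as `g` on the subtree rooted at `u`
(under the natural identification of the subtree with the whole tree) and trivially
elsewhere. -/
def graft {p : ℕ} (u : Vert p) (g : Equiv.Perm (Vert p)) : Equiv.Perm (Vert p) where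
  toFun v := if u <+: v then u ++ g (v.drop u.length) else v
  invFun v := if u <+: v then u ++ g.symm (v.drop u.length) else v
  left_inv v := by
    by_cases h : u <+: v
    · simp only [h, if_pos, List.prefix_append, if_true, List.drop_left,
        Equiv.symm_apply_apply]
      exact (List.prefix_iff_eq_append.mp h)
    · simp [h]
  right_inv v := by
    by_cases h : u <+: v
    · simp only [h, if_pos, List.prefix_append, if_true, List.drop_left,
        Equiv.apply_symm_apply]
      exact (List.prefix_iff_eq_append.mp h)
    · simp [h]

/-- The rigid vertex stabilizer of `u` in `G`: elements of `G` fixing every vertex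
that does not have `u` as a prefix. -/
def rstab {p : ℕ} (G : Subgroup (Equiv.Perm (Vert p))) (u : Vert p) :
    Subgroup (Equiv.Perm (Vert p)) where
  carrier := {g | g ∈ G ∧ ∀ v : Vert p, ¬ u <+: v → g v = v}
  one_mem' := ⟨G.one_mem, fun v _ => rfl⟩
  mul_mem' := by
    rintro a b ⟨haG, ha⟩ ⟨hbG, hb⟩
    exact ⟨G.mul_mem haG hbG, fun v hv => by
      simp [Equiv.Perm.mul_apply, hb v hv, ha v hv]⟩
  inv_mem' := by
    rintro a ⟨haG, ha⟩
    refine ⟨G.inv_mem haG, fun v hv => ?_⟩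
    have := ha v hv
    calc a⁻¹ v = a⁻¹ (a v) := by rw [this]
    _ = v := by simp

/-- The rigid `n`-th level stabilizer: the subgroup generated by the rigid vertex
stabilizers of all vertices at level `n` (their internal product). -/
def rstabLevel {p : ℕ} (G : Subgroup (Equiv.Perm (Vert p))) (n : ℕ) :
    Subgroup (Equiv.Perm (Vert p)) :=
  ⨆ u ∈ {u : Vert p | u.length = n}, rstab G u

namespace Stmt10Aux

variable {p : ℕ} {G : Subgroup (Equiv.Perm (Vert p))}

open scoped commutatorElement

section TreeLemmas

variable (htree : ∀ g ∈ G, ∀ (v : Vert p) (x : Fin p), ∃ y : Fin p,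
      g (v ++ [x]) = g v ++ [y])

include htree

lemma append_exists {g : Equiv.Perm (Vert p)} (hg : g ∈ G) (v w : Vert p) :
    ∃ t : Vert p, t.length = w.length ∧ g (v ++ w) = g v ++ t := by
  induction w using List.reverseRecOn with
  | nil => exact ⟨[], rfl, by simp⟩
  | append_singleton w x ih =>
    obtain ⟨t, ht, he⟩ := ih
    obtain ⟨y, hy⟩ := htree g hg (v ++ w) x
    refine ⟨t ++ [y], by simp [ht], ?_⟩
    rw [← List.append_assoc, hy, he, List.append_assoc]

lemma len_aux {g : Equiv.Perm (Vert p)} (hg : g ∈ G) (v : Vert p) :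
    (g v).length = (g []).length + v.length := by
  obtain ⟨t, ht, he⟩ := append_exists htree hg [] v
  simp only [List.nil_append] at he
  rw [he, List.length_append, ht]

lemma nil_eq {g : Equiv.Perm (Vert p)} (hg : g ∈ G) : g [] = ([] : Vert p) := by
  have h1 := len_aux htree (G.inv_mem hg) (g [])
  rw [Equiv.Perm.inv_def, Equiv.symm_apply_apply] at h1
  simp only [List.length_nil] at h1
  exact List.length_eq_zero_iff.mp (by omega)

lemma len_eq {g : Equiv.Perm (Vert p)} (hg : g ∈ G) (v : Vert p) :
    (g v).length = v.length := by
  rw [len_aux htree hg, nil_eq htree hg]; simp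

lemma prefix_mono {g : Equiv.Perm (Vert p)} (hg : g ∈ G) {u v : Vert p}
    (h : u <+: v) : g u <+: g v := by
  obtain ⟨w, rfl⟩ := h
  obtain ⟨t, _, he⟩ := append_exists htree hg u w
  rw [he]; exact List.prefix_append _ _

end TreeLemmas

lemma rstab_le {u : Vert p} : rstab G u ≤ G := fun _ ha => ha.1

lemma rstab_prefix {u : Vert p} {a : Equiv.Perm (Vert p)} (ha : a ∈ rstab G u)
    {v : Vert p} (h : u <+: v) : u <+: a v := by
  by_contra hc
  have h2 := ((rstab G u).inv_mem ha).2 (a v) hc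
  rw [Equiv.Perm.inv_def, Equiv.symm_apply_apply] at h2
  exact hc (h2 ▸ h)

lemma prefix_unique {u w v : Vert p} (hl : u.length = w.length)
    (hu : u <+: v) (hw : w <+: v) : u = w :=
  (List.prefix_of_prefix_length_le hu hw hl.le).eq_of_length hl

lemma rstab_commute {u w : Vert p} (hl : u.length = w.length) (huw : u ≠ w)
    {a b : Equiv.Perm (Vert p)} (ha : a ∈ rstab G u) (hb : b ∈ rstab G w) :
    Commute a b := by
  apply Equiv.ext
  intro v
  by_cases hu : u <+: v
  · have hwv : ¬ w <+: v := fun h => huw (prefix_unique hl hu h)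
    have h2 : u <+: a v := rstab_prefix ha hu
    have hw2 : ¬ w <+: a v := fun h => huw (prefix_unique hl h2 h)
    simp [Equiv.Perm.mul_apply, hb.2 v hwv, hb.2 _ hw2]
  · by_cases hw : w <+: v
    · have h2 : w <+: b v := rstab_prefix hb hw
      have hu2 : ¬ u <+: b v := fun h => huw (prefix_unique hl h h2)
      simp [Equiv.Perm.mul_apply, ha.2 v hu, ha.2 _ hu2]
    · simp [Equiv.Perm.mul_apply, ha.2 v hu, hb.2 v hw,
        ha.2 v hu ▸ ha.2 v hu, hb.2 _ hw]

lemma rstab_conj (htree : ∀ g ∈ G, ∀ (v : Vert p) (x : Fin p), ∃ y : Fin p,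
      g (v ++ [x]) = g v ++ [y])
    {g : Equiv.Perm (Vert p)} (hg : g ∈ G) {u : Vert p} {a : Equiv.Perm (Vert p)}
    (ha : a ∈ rstab G u) : g * a * g⁻¹ ∈ rstab G (g u) := by
  refine ⟨G.mul_mem (G.mul_mem hg ha.1) (G.inv_mem hg), fun v hv => ?_⟩
  have hnu : ¬ u <+: g⁻¹ v := fun h => hv (by
    have := prefix_mono htree hg h
    rwa [Equiv.Perm.inv_def, Equiv.apply_symm_apply] at this)
  rw [Equiv.Perm.inv_def] at hnu
  simp [Equiv.Perm.mul_apply, ha.2 _ hnu]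

section Key

variable (htree : ∀ g ∈ G, ∀ (v : Vert p) (x : Fin p), ∃ y : Fin p,
      g (v ++ [x]) = g v ++ [y])
variable {N' : Subgroup (Equiv.Perm (Vert p))}

include htree

lemma comm_mem_base (hN'G : N' ≤ G)
    (hconj : ∀ g ∈ G, ∀ x ∈ N', g * x * g⁻¹ ∈ N')
    {a : Equiv.Perm (Vert p)} (haN : a ∈ N') {u₀ : Vert p} (hmove : a u₀ ≠ u₀) :
    ∀ h ∈ rstab G u₀, ∀ k ∈ rstab G u₀, ⁅h, k⁆ ∈ N' := by
  have haG : a ∈ G := hN'G haN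
  have hlen : (a u₀).length = u₀.length := len_eq htree haG u₀
  have haux : ∀ h ∈ rstab G u₀, ∀ k ∈ rstab G u₀, ⁅h⁻¹, k⁆ ∈ N' := by
    intro h hh k hk
    have hb : a * h * a⁻¹ ∈ rstab G (a u₀) := rstab_conj htree haG hh
    have hbh : Commute (a * h * a⁻¹) h := rstab_commute hlen hmove hb hh
    have hbk : Commute (a * h * a⁻¹) k := rstab_commute hlen hmove hb hk
    have hc : ⁅a, h⁆ ∈ N' := by
      have e : ⁅a, h⁆ = a * (h * a⁻¹ * h⁻¹) := by
        rw [commutatorElement_def]; group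
      rw [e]
      exact N'.mul_mem haN (hconj h (rstab_le hh) a⁻¹ (N'.inv_mem haN))
    have hd : ⁅⁅a, h⁆, k⁆ ∈ N' := by
      have e : ⁅⁅a, h⁆, k⁆ = ⁅a, h⁆ * (k * ⁅a, h⁆⁻¹ * k⁻¹) := by
        rw [commutatorElement_def]; group
      rw [e]
      exact N'.mul_mem hc (hconj k (rstab_le hk) _ (N'.inv_mem hc))
    have hX : Commute (a * h * a⁻¹) (h⁻¹ * k * h) :=
      ((hbh.inv_right).mul_right hbk).mul_right hbh
    have key : ⁅⁅a, h⁆, k⁆ = ⁅h⁻¹, k⁆ := by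
      have e1 : ⁅⁅a, h⁆, k⁆ = (a * h * a⁻¹) * (h⁻¹ * k * h) * (a * h * a⁻¹)⁻¹ * k⁻¹ := by
        simp only [commutatorElement_def]; group
      rw [e1, hX.eq, commutatorElement_def]
      group
    rw [← key]; exact hd
  intro h hh k hk
  have := haux h⁻¹ ((rstab G u₀).inv_mem hh) k hk
  rwa [inv_inv] at this

lemma comm_mem_all
    (htrans : ∀ u v : Vert p, u.length = v.length → ∃ g ∈ G, g u = v)
    (hN'G : N' ≤ G)
    (hconj : ∀ g ∈ G, ∀ x ∈ N', g * x * g⁻¹ ∈ N')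
    {a : Equiv.Perm (Vert p)} (haN : a ∈ N') {u₀ : Vert p} (hmove : a u₀ ≠ u₀)
    {w : Vert p} (hw : w.length = u₀.length) :
    ∀ h ∈ rstab G w, ∀ k ∈ rstab G w, ⁅h, k⁆ ∈ N' := by
  obtain ⟨g, hgG, hgu⟩ := htrans u₀ w hw.symm
  intro h hh k hk
  have hginv : g⁻¹ ∈ G := G.inv_mem hgG
  have hu : g⁻¹ w = u₀ := by rw [← hgu, Equiv.Perm.inv_def, Equiv.symm_apply_apply]
  have hh' : g⁻¹ * h * g⁻¹⁻¹ ∈ rstab G u₀ := by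
    rw [← hu]; exact rstab_conj htree hginv hh
  have hk' : g⁻¹ * k * g⁻¹⁻¹ ∈ rstab G u₀ := by
    rw [← hu]; exact rstab_conj htree hginv hk
  have hcc := comm_mem_base htree hN'G hconj haN hmove _ hh' _ hk'
  have e : ⁅h, k⁆ = g * ⁅g⁻¹ * h * g⁻¹⁻¹, g⁻¹ * k * g⁻¹⁻¹⁆ * g⁻¹ := by
    simp only [commutatorElement_def]; group
  rw [e]; exact hconj g hgG _ hcc

end Key

section Level

variable {N' : Subgroup (Equiv.Perm (Vert p))}

lemma comm_level_single
    (hconj : ∀ g ∈ G, ∀ x ∈ N', g * x * g⁻¹ ∈ N')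
    {x : Equiv.Perm (Vert p)} {n : ℕ}
    (hbase : ∀ w : Vert p, w.length = n → ∀ k ∈ rstab G w, ⁅x, k⁆ ∈ N') :
    ∀ y ∈ rstabLevel G n, ⁅x, y⁆ ∈ N' := by
  intro y hy
  have key : y ∈ G ∧ ⁅x, y⁆ ∈ N' := by
    refine Subgroup.iSup_induction
      (fun u => ⨆ (_ : u ∈ {u : Vert p | u.length = n}), rstab G u)
      (C := fun y => y ∈ G ∧ ⁅x, y⁆ ∈ N') hy ?_ ?_ ?_
    · intro u z hz
      replace hz : z ∈ ⨆ (_ : u ∈ {u : Vert p | u.length = n}), rstab G u := hz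
      by_cases hu : u.length = n
      · have hz' : z ∈ rstab G u := by
          rwa [iSup_pos (show u ∈ {u : Vert p | u.length = n} from hu)] at hz
        exact ⟨rstab_le hz', hbase u hu z hz'⟩
      · rw [iSup_neg (show u ∉ {u : Vert p | u.length = n} from hu)] at hz
        rw [Subgroup.mem_bot.mp hz]
        exact ⟨G.one_mem, by rw [commutatorElement_one_right]; exact N'.one_mem⟩
    · exact ⟨G.one_mem, by rw [commutatorElement_one_right]; exact N'.one_mem⟩
    · rintro y z ⟨hyG, hy'⟩ ⟨hzG, hz'⟩
      refine ⟨G.mul_mem hyG hzG, ?_⟩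
      have e : ⁅x, y * z⁆ = ⁅x, y⁆ * (y * ⁅x, z⁆ * y⁻¹) := by
        simp only [commutatorElement_def]; group
      rw [e]; exact N'.mul_mem hy' (hconj y hyG _ hz')
  exact key.2

lemma comm_level
    (htree : ∀ g ∈ G, ∀ (v : Vert p) (x : Fin p), ∃ y : Fin p,
      g (v ++ [x]) = g v ++ [y])
    (htrans : ∀ u v : Vert p, u.length = v.length → ∃ g ∈ G, g u = v)
    (hN'G : N' ≤ G)
    (hconj : ∀ g ∈ G, ∀ x ∈ N', g * x * g⁻¹ ∈ N')
    {a : Equiv.Perm (Vert p)} (haN : a ∈ N') {u₀ : Vert p} (hmove : a u₀ ≠ u₀) :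
    ∀ x ∈ rstabLevel G u₀.length, ∀ y ∈ rstabLevel G u₀.length, ⁅x, y⁆ ∈ N' := by
  intro x hx
  have key : x ∈ G ∧ ∀ y ∈ rstabLevel G u₀.length, ⁅x, y⁆ ∈ N' := by
    refine Subgroup.iSup_induction
      (fun u => ⨆ (_ : u ∈ {u : Vert p | u.length = u₀.length}), rstab G u)
      (C := fun x => x ∈ G ∧ ∀ y ∈ rstabLevel G u₀.length, ⁅x, y⁆ ∈ N') hx ?_ ?_ ?_
    · intro u z hz
      replace hz : z ∈ ⨆ (_ : u ∈ {u : Vert p | u.length = u₀.length}), rstab G u := hz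
      by_cases hu : u.length = u₀.length
      · have hz' : z ∈ rstab G u := by
          rwa [iSup_pos (show u ∈ {u : Vert p | u.length = u₀.length} from hu)] at hz
        refine ⟨rstab_le hz', comm_level_single hconj ?_⟩
        intro w hw k hk
        by_cases huw : u = w
        · subst huw
          exact comm_mem_all htree htrans hN'G hconj haN hmove hu z hz' k hk
        · have hcomm : Commute z k := rstab_commute (hu.trans hw.symm) huw hz' hk
          rw [commutatorElement_eq_one_iff_commute.mpr hcomm]
          exact N'.one_mem
      · rw [iSup_neg (show u ∉ {u : Vert p | u.length = u₀.length} from hu)] at hz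
        rw [Subgroup.mem_bot.mp hz]
        exact ⟨G.one_mem, fun y _ => by
          rw [commutatorElement_one_left]; exact N'.one_mem⟩
    · exact ⟨G.one_mem, fun y _ => by
        rw [commutatorElement_one_left]; exact N'.one_mem⟩
    · rintro y z ⟨hyG, hy'⟩ ⟨hzG, hz'⟩
      refine ⟨G.mul_mem hyG hzG, fun w hw => ?_⟩
      have e : ⁅y * z, w⁆ = y * ⁅z, w⁆ * y⁻¹ * ⁅y, w⁆ := by
        simp only [commutatorElement_def]; group
      rw [e]
      exact N'.mul_mem (hconj y hyG _ (hz' w hw)) (hy' w hw)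
  exact key.2

end Level

end Stmt10Aux


/-- A group `G` of automorphisms of the regular `p`-adic rooted
tree acting transitively on every level, whose rigid level stabilizers all have
finite index, and which is finitely generated and torsion, is just infinite:
it is infinite and every nontrivial normal subgroup has finite index. -/
theorem stmt10 (p : ℕ) (hp : p.Prime) (G : Subgroup (Equiv.Perm (Vert p)))
    (htree : ∀ g ∈ G, ∀ (v : Vert p) (x : Fin p), ∃ y : Fin p,
      g (v ++ [x]) = g v ++ [y])
    (htrans : ∀ u v : Vert p, u.length = v.length → ∃ g ∈ G, g u = v)
    (hrs : ∀ n : ℕ, (rstabLevel G n).relIndex G ≠ 0)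
    (hfg : Group.FG G) (htor : ∀ g : G, IsOfFinOrder g) :
    Infinite G ∧ ∀ N : Subgroup G, N.Normal → N ≠ ⊥ → N.index ≠ 0 := by
  classical
  haveI : NeZero p := ⟨hp.ne_zero⟩
  constructor
  · -- G is infinite
    by_contra hinf
    rw [not_infinite_iff_finite] at hinf
    set n := Nat.card ↥G with hn
    have hex : ∀ f : Fin n → Fin p, ∃ g ∈ G,
        g (List.replicate n (0 : Fin p)) = List.ofFn f := by
      intro f
      exact htrans _ _ (by simp)
    choose F hFG hF using hex
    have hinj : Function.Injective (fun f : Fin n → Fin p => (⟨F f, hFG f⟩ : ↥G)) := by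
      intro f f' h
      have h2 : F f = F f' := congrArg Subtype.val h
      have h3 : List.ofFn f = List.ofFn f' := by rw [← hF f, ← hF f', h2]
      exact List.ofFn_injective h3
    have hcard := Nat.card_le_card_of_injective _ hinj
    have hcard2 : Nat.card (Fin n → Fin p) = p ^ n := by
      simp [Nat.card_eq_fintype_card]
    rw [hcard2, ← hn] at hcard
    have hlt : n < p ^ n :=
      lt_of_lt_of_le (Nat.lt_two_pow_self (n := n)) (Nat.pow_le_pow_left hp.two_le n)
    exact absurd hcard (not_le.mpr hlt)
  · intro N hN hNbot
    rcases N.bot_or_exists_ne_one with h | ⟨x, hxN, hx1⟩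
    · exact absurd h hNbot
    set N' : Subgroup (Equiv.Perm (Vert p)) := N.map G.subtype with hN'def
    have hN'G : N' ≤ G := by rintro _ ⟨y, _, rfl⟩; exact y.2
    have hconj : ∀ g ∈ G, ∀ z ∈ N', g * z * g⁻¹ ∈ N' := by
      rintro g hg _ ⟨y, hy, rfl⟩
      exact ⟨⟨g, hg⟩ * y * ⟨g, hg⟩⁻¹, hN.conj_mem y hy ⟨g, hg⟩, rfl⟩
    have haN' : (x : Equiv.Perm (Vert p)) ∈ N' := ⟨x, hxN, rfl⟩
    have hx1' : (x : Equiv.Perm (Vert p)) ≠ 1 := fun h => hx1 (Subtype.ext h)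
    obtain ⟨u₀, hmove⟩ : ∃ u₀ : Vert p, (x : Equiv.Perm (Vert p)) u₀ ≠ u₀ := by
      by_contra hcon
      push_neg at hcon
      exact hx1' (Equiv.ext hcon)
    have hcomm := Stmt10Aux.comm_level htree htrans hN'G hconj haN' hmove
    set L := rstabLevel G u₀.length with hLdef
    set L' := L.subgroupOf G with hL'def
    have hL'index : L'.index ≠ 0 := hrs u₀.length
    haveI : L'.FiniteIndex := ⟨hL'index⟩
    haveI : Group.FG ↥G := hfg
    haveI hFGL' : Group.FG ↥L' := inferInstance
    have htorL' : ∀ z : ↥L', IsOfFinOrder z := by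
      intro z
      have h1 := htor (L'.subtype z)
      rw [← orderOf_pos_iff] at h1 ⊢
      rwa [orderOf_injective L'.subtype L'.subtype_injective z] at h1
    have hsurj : Function.Surjective (Abelianization.of (G := ↥L')) := by
      intro z
      obtain ⟨w, hw⟩ := Quot.exists_rep z
      exact ⟨w, hw⟩
    haveI : Group.FG (Abelianization ↥L') := Group.fg_of_surjective hsurj
    have hfinAb : Finite (Abelianization ↥L') :=
      CommGroup.finite_of_fg_torsion _ (fun z => by
        obtain ⟨w, rfl⟩ := hsurj z
        exact MonoidHom.isOfFinOrder Abelianization.of (htorL' w))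
    have hCindex : (commutator ↥L').index ≠ 0 := by
      have he : (commutator ↥L').index = Nat.card (Abelianization ↥L') := rfl
      rw [he]
      exact Nat.card_ne_zero.mpr ⟨⟨1⟩, hfinAb⟩
    set K := (commutator ↥L').map L'.subtype with hKdef
    have hKL' : K ≤ L' := by rintro _ ⟨z, _, rfl⟩; exact z.2
    have hKrel : K.relIndex L' = (commutator ↥L').index := by
      have hsub : K.subgroupOf L' = commutator ↥L' :=
        Subgroup.comap_map_eq_self_of_injective L'.subtype_injective _
      rw [Subgroup.relIndex, hsub]
    have hKindex : K.index ≠ 0 := by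
      have h1 := Subgroup.relIndex_mul_index hKL'
      rw [hKrel] at h1
      intro h0
      rw [h0] at h1
      exact Nat.mul_ne_zero hCindex hL'index h1
    open scoped commutatorElement in
    have hKN : K ≤ N := by
      have hKeq : K = ⁅L', L'⁆ := by
        rw [hKdef, commutator, Subgroup.map_commutator, ← MonoidHom.range_eq_map,
          L'.range_subtype]
      rw [hKeq, Subgroup.commutator_le]
      intro g1 hg1 g2 hg2
      have h3 := hcomm _ (Subgroup.mem_subgroupOf.mp hg1) _ (Subgroup.mem_subgroupOf.mp hg2)
      have h4 : (G.subtype ⁅g1, g2⁆) ∈ N' := by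
        rw [map_commutatorElement]; exact h3
      obtain ⟨y, hyN, hyeq⟩ := h4
      have h5 : y = ⁅g1, g2⁆ := G.subtype_injective hyeq
      rwa [← h5]
    have hdvd := Subgroup.index_dvd_of_le hKN
    intro h0
    rw [h0] at hdvd
    exact hKindex (Nat.eq_zero_of_zero_dvd hdvd)
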